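/- For every difference graph H, the local complete-bipartite covering number of H equals the least k such that z < C(2k,k), where z is the number of distinct neighborhood sizes among the vertices of one partite set of H. -/

import Mathlib

open scoped Classical

/-- A set of complete bipartite subgraphs (pairs `(S,T)` with all pairs adjacent)
whose union is the bipartite graph given by the relation `E`. -/
def CBCover {α β : Type*} (E : α → β → Prop) (C : Finset (Set α × Set β)) : Prop :=
  (∀ P ∈ C, ∀ a ∈ P.1, ∀ b ∈ P.2, E a b) ∧
  (∀ a b, E a b → ∃ P ∈ C, a ∈ P.1 ∧ b ∈ P.2)

/-- Every vertex lies in at most `k` of the covering subgraphs. -/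
def CBLocal {α β : Type*} (C : Finset (Set α × Set β)) (k : ℕ) : Prop :=
  (∀ a, (C.filter (fun P => a ∈ P.1)).card ≤ k) ∧
  (∀ b, (C.filter (fun P => b ∈ P.2)).card ≤ k)


noncomputable section

variable {k : ℕ}

abbrev Rho (k : ℕ) := Fin k ⊕ Fin k

/-- the moment-curve row vector -/
def momentRow (k : ℕ) (x : ℝ) : Rho k → ℝ := fun c => x ^ ((finSumFinEquiv c : Fin (k+k)) : ℕ)

/-- matrix with first k rows given by `R`, last k rows moment rows of `w` -/
def MatRW (R : Fin k → Rho k → ℝ) (w : Fin k → ℝ) : Matrix (Rho k) (Rho k) ℝ :=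
  Matrix.of (Sum.elim R (fun b => momentRow k (w b)))

lemma MatRW_moment (u w : Fin k → ℝ) :
    MatRW (fun a => momentRow k (u a)) w
      = Matrix.of (fun i j => (Sum.elim u w i) ^ ((finSumFinEquiv j : Fin (k+k)) : ℕ)) := by
  ext i j
  cases i <;> rfl

lemma det_moment_ne_zero (r : Rho k → ℝ) (hr : Function.Injective r) :
    (Matrix.of (fun i j : Rho k => r i ^ ((finSumFinEquiv j : Fin (k+k)) : ℕ))).det ≠ 0 := by
  have h : (Matrix.of (fun i j : Rho k => r i ^ ((finSumFinEquiv j : Fin (k+k)) : ℕ)))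
      = (Matrix.vandermonde (r ∘ finSumFinEquiv.symm)).submatrix finSumFinEquiv finSumFinEquiv := by
    ext i j
    simp [Matrix.vandermonde, Matrix.submatrix]
  rw [h, Matrix.det_submatrix_equiv_self, Matrix.det_vandermonde]
  refine Finset.prod_ne_zero_iff.2 fun i _ => Finset.prod_ne_zero_iff.2 fun j hj => ?_
  rw [Finset.mem_Ioi] at hj
  have : (r ∘ finSumFinEquiv.symm) j ≠ (r ∘ finSumFinEquiv.symm) i := by
    intro hEq
    exact absurd (finSumFinEquiv.symm.injective (hr hEq)) hj.ne'
  exact sub_ne_zero.2 this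

end

noncomputable section
variable {k : ℕ}

def DetW (w : Fin k → ℝ) (R : Fin k → Rho k → ℝ) : ℝ := (MatRW R w).det

lemma det_expand (hk : 0 < k) (w : Fin k → ℝ) (R : Fin k → Rho k → ℝ) :
    DetW w R = ∑ c : Fin k → Rho k, (∏ a, R a (c a)) * DetW w (fun a => Pi.single (c a) 1) := by
  classical
  set f := (Matrix.detRowAlternating : (Rho k → ℝ) [⋀^Rho k]→ₗ[ℝ] ℝ).toMultilinearMap with hf
  have hdet : ∀ M : Matrix (Rho k) (Rho k) ℝ, M.det = f M := fun M => rfl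
  set c₀ : Rho k := Sum.inl ⟨0, hk⟩ with hc₀
  set G : Rho k → Rho k → (Rho k → ℝ) :=
    Sum.elim (fun a c => R a c • (Pi.single c (1:ℝ) : Rho k → ℝ)) (fun b _ => momentRow k (w b)) with hG
  set A : Rho k → Finset (Rho k) := Sum.elim (fun _ => Finset.univ) (fun _ => {c₀}) with hA
  have step1 : (fun i => ∑ c ∈ A i, G i c) = MatRW R w := by
    funext i
    cases i with
    | inl a =>
      funext d
      simp only [hA, hG, Sum.elim_inl, MatRW, Matrix.of_apply, Finset.sum_apply,
        Pi.smul_apply, Pi.single_apply, smul_eq_mul, mul_ite, mul_one, mul_zero]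
      simp
    | inr b =>
      simp only [hA, hG, Sum.elim_inr, Finset.sum_singleton]
      rfl
  have step2 : DetW w R = ∑ r ∈ Fintype.piFinset A, f (fun i => G i (r i)) := by
    rw [DetW, hdet, ← step1, f.map_sum_finset]
  have step3 : ∀ r : Rho k → Rho k,
      f (fun i => G i (r i))
        = (∏ a, R a (r (Sum.inl a))) * DetW w (fun a => Pi.single (r (Sum.inl a)) 1) := by
    intro r
    have hsc : (fun i => G i (r i)) = fun i =>
        (Sum.elim (fun a => R a (r (Sum.inl a))) (fun _ => (1:ℝ)) i) •
          (MatRW (fun a => Pi.single (r (Sum.inl a)) 1) w i) := by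
      funext i
      cases i with
      | inl a => rfl
      | inr b =>
        simp only [Sum.elim_inr, one_smul]
        rfl
    rw [hsc]
    erw [f.map_smul_univ]
    rw [Fintype.prod_sum_type]
    simp [DetW, hdet, smul_eq_mul]
  have step4 : Fintype.piFinset A =
      Finset.image (fun c : Fin k → Rho k => Sum.elim c (fun _ => c₀)) Finset.univ := by
    ext r
    simp only [Fintype.mem_piFinset, Finset.mem_image, Finset.mem_univ, true_and]
    constructor
    · intro h
      refine ⟨fun a => r (Sum.inl a), ?_⟩
      funext i
      cases i with
      | inl a => rfl
      | inr b =>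
        have := h (Sum.inr b)
        simp [hA] at this
        simp [this]
    · rintro ⟨c, rfl⟩ i
      cases i <;> simp [hA]
  have hinj : Function.Injective (fun c : Fin k → Rho k => Sum.elim c (fun _ : Fin k => c₀)) := by
    intro c c' h
    funext a
    exact congrFun h (Sum.inl a)
  rw [step2, step4, Finset.sum_image (fun x _ y _ h => hinj h)]
  refine Finset.sum_congr rfl fun c _ => ?_
  rw [step3]
  rfl

end

noncomputable section
variable {k : ℕ}

lemma DetW_single_noninj (w : Fin k → ℝ) (c : Fin k → Rho k) (hc : ¬ Function.Injective c) :
    DetW w (fun a => Pi.single (c a) 1) = 0 := by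
  rw [Function.not_injective_iff] at hc
  obtain ⟨a, a', hca, hne⟩ := hc
  refine Matrix.det_zero_of_row_eq (M := MatRW (fun a => Pi.single (c a) 1) w)
    (i := Sum.inl a) (j := Sum.inl a') (by simp [hne]) ?_
  show (Pi.single (c a) 1 : Rho k → ℝ) = Pi.single (c a') 1
  rw [hca]

/-- canonical enumeration of a `k`-subset of `Rho k` -/
def repE (s : Finset (Rho k)) (hs : s.card = k) : Fin k ≃ {x // x ∈ s} :=
  (Fintype.equivFinOfCardEq (by rw [Fintype.card_coe, hs])).symm

def repF (s : Finset (Rho k)) (hs : s.card = k) : Fin k → Rho k := fun a => (repE s hs a : Rho k)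

lemma DetW_single_inj (c : Fin k → Rho k) (hc : Function.Injective c)
    {s : Finset (Rho k)} (hs : s.card = k) (himg : Finset.image c Finset.univ = s) :
    ∃ ε : ℝ, ∀ w, DetW w (fun a => Pi.single (c a) 1)
      = ε * DetW w (fun a => Pi.single (repF s hs a) 1) := by
  classical
  have hmem : ∀ a, c a ∈ s := fun a => himg ▸ Finset.mem_image_of_mem c (Finset.mem_univ a)
  let toS : Fin k → {x // x ∈ s} := fun a => ⟨c a, hmem a⟩
  have htoS : Function.Injective toS := fun a a' h => hc (congrArg Subtype.val h)
  have hbij : Function.Bijective toS := by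
    rw [Fintype.bijective_iff_injective_and_card]
    exact ⟨htoS, by rw [Fintype.card_coe, hs, Fintype.card_fin]⟩
  let σ : Equiv.Perm (Fin k) := (Equiv.ofBijective toS hbij).trans (repE s hs).symm
  have hcrep : ∀ a, repF s hs (σ a) = c a := by
    intro a
    show ((repE s hs) ((repE s hs).symm (toS a)) : Rho k) = c a
    rw [Equiv.apply_symm_apply]
  refine ⟨((Equiv.Perm.sign (Equiv.sumCongr σ (Equiv.refl (Fin k)))) : ℤ), fun w => ?_⟩
  have hmat : MatRW (fun a => Pi.single (c a) 1) w
      = (MatRW (fun a => Pi.single (repF s hs a) 1) w).submatrix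
          (Equiv.sumCongr σ (Equiv.refl (Fin k))) id := by
    ext i j
    cases i with
    | inl a =>
      show (Pi.single (c a) 1 : Rho k → ℝ) j = (Pi.single (repF s hs (σ a)) 1 : Rho k → ℝ) j
      rw [hcrep]
    | inr b => rfl
  rw [DetW, hmat, Matrix.det_permute]
  rfl

end

noncomputable section

lemma core_pairs_bound {γ : Type*} [DecidableEq γ] {k m : ℕ} (hk : 0 < k)
    (C D : Fin m → Finset γ)
    (hC : ∀ i, (C i).card = k) (hD : ∀ j, (D j).card = k)
    (hlt : ∀ i j : Fin m, i < j → (C i ∩ D j).Nonempty)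
    (hge : ∀ i j : Fin m, j ≤ i → C i ∩ D j = ∅) :
    m ≤ (k + k).choose k := by
  classical
  by_contra hcon
  push_neg at hcon
  -- ground embedding into ℝ
  set U : Finset γ := Finset.univ.biUnion (fun i : Fin m => C i ∪ D i) with hU
  set t : γ → ℝ := fun x =>
    if h : x ∈ U then ((Fintype.equivFin {y // y ∈ U} ⟨x, h⟩ : Fin _) : ℕ) else 0 with ht
  have htinj : ∀ x ∈ U, ∀ y ∈ U, t x = t y → x = y := by
    intro x hx y hy hxy
    rw [ht] at hxy
    simp only [hx, hy, dif_pos] at hxy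
    have : (Fintype.equivFin {y // y ∈ U} ⟨x, hx⟩) = (Fintype.equivFin {y // y ∈ U} ⟨y, hy⟩) :=
      Fin.ext (Nat.cast_injective hxy)
    exact congrArg Subtype.val ((Fintype.equivFin {y // y ∈ U}).injective this)
  have hCU : ∀ i, ∀ x ∈ C i, x ∈ U := fun i x hx =>
    Finset.mem_biUnion.2 ⟨i, Finset.mem_univ i, Finset.mem_union_left _ hx⟩
  have hDU : ∀ i, ∀ x ∈ D i, x ∈ U := fun i x hx =>
    Finset.mem_biUnion.2 ⟨i, Finset.mem_univ i, Finset.mem_union_right _ hx⟩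
  -- enumerations
  let eC : ∀ i, Fin k ≃ {x // x ∈ C i} := fun i =>
    (Fintype.equivFinOfCardEq (by rw [Fintype.card_coe, hC i])).symm
  let eD : ∀ i, Fin k ≃ {x // x ∈ D i} := fun i =>
    (Fintype.equivFinOfCardEq (by rw [Fintype.card_coe, hD i])).symm
  let u : Fin m → Fin k → ℝ := fun i a => t (eC i a : γ)
  let w : Fin m → Fin k → ℝ := fun j b => t (eD j b : γ)
  -- the vectors
  let K := {s : Finset (Rho k) // s.card = k}
  let V : Fin m → (K → ℝ) := fun j s => DetW (w j) (fun a => Pi.single (repF s.1 s.2 a) 1)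
  have hcardK : Fintype.card K = (k + k).choose k := by
    rw [Fintype.card_finset_len, Fintype.card_sum, Fintype.card_fin]
  have hnli : ¬ LinearIndependent ℝ V := by
    intro h
    have h2 := h.fintype_card_le_finrank
    rw [Module.finrank_fintype_fun_eq_card, Fintype.card_fin, hcardK] at h2
    omega
  obtain ⟨g, hg0, j1, hj1⟩ := Fintype.not_linearIndependent_iff.1 hnli
  have hcoord : ∀ s : K, ∑ j, g j * V j s = 0 := by
    intro s
    have h3 := congrFun hg0 s
    simpa [Finset.sum_apply] using h3
  -- the key identity
  have key : ∀ R : Fin k → Rho k → ℝ, ∑ j, g j * DetW (w j) R = 0 := by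
    intro R
    have expand : ∀ j, DetW (w j) R
        = ∑ c : Fin k → Rho k, (∏ a, R a (c a)) * DetW (w j) (fun a => Pi.single (c a) 1) :=
      fun j => det_expand hk (w j) R
    calc ∑ j, g j * DetW (w j) R
        = ∑ j, ∑ c : Fin k → Rho k,
            (∏ a, R a (c a)) * (g j * DetW (w j) (fun a => Pi.single (c a) 1)) := by
          refine Finset.sum_congr rfl fun j _ => ?_
          rw [expand j, Finset.mul_sum]
          exact Finset.sum_congr rfl fun c _ => by ring
      _ = ∑ c : Fin k → Rho k,
            (∏ a, R a (c a)) * ∑ j, g j * DetW (w j) (fun a => Pi.single (c a) 1) := by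
          rw [Finset.sum_comm]
          exact Finset.sum_congr rfl fun c _ => (Finset.mul_sum _ _ _).symm
      _ = 0 := by
          refine Finset.sum_eq_zero fun c _ => ?_
          by_cases hcinj : Function.Injective c
          · have hcs : (Finset.image c Finset.univ).card = k := by
              rw [Finset.card_image_of_injective _ hcinj, Finset.card_univ, Fintype.card_fin]
            obtain ⟨ε, hε⟩ := DetW_single_inj c hcinj hcs rfl
            have : ∑ j, g j * DetW (w j) (fun a => Pi.single (c a) 1)
                = ε * ∑ j, g j * V j ⟨Finset.image c Finset.univ, hcs⟩ := by
              rw [Finset.mul_sum]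
              exact Finset.sum_congr rfl fun j _ => by rw [hε (w j)]; ring
            rw [this, hcoord, mul_zero, mul_zero]
          · have : ∀ j, DetW (w j) (fun a => Pi.single (c a) 1) = 0 :=
              fun j => DetW_single_noninj (w j) c hcinj
            simp [this]
  -- minimal nonzero coefficient
  set T : Finset (Fin m) := Finset.univ.filter (fun j => g j ≠ 0) with hT
  have hTne : T.Nonempty := ⟨j1, by simp [hT, hj1]⟩
  set j0 := T.min' hTne with hj0def
  have hj0 : g j0 ≠ 0 := (Finset.mem_filter.1 (T.min'_mem hTne)).2
  have happ := key (fun a => momentRow k (u j0 a))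
  have hzero : ∀ j, j0 < j → DetW (w j) (fun a => momentRow k (u j0 a)) = 0 := by
    intro j hjlt
    obtain ⟨x, hx⟩ := hlt j0 j hjlt
    rw [Finset.mem_inter] at hx
    set a : Fin k := (eC j0).symm ⟨x, hx.1⟩ with ha
    set b : Fin k := (eD j).symm ⟨x, hx.2⟩ with hb
    refine Matrix.det_zero_of_row_eq (M := MatRW (fun a => momentRow k (u j0 a)) (w j))
      (i := Sum.inl a) (j := Sum.inr b) (by simp) ?_
    show momentRow k (u j0 a) = momentRow k (w j b)
    have h1 : u j0 a = t x := by
      rw [ha]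
      show t ((eC j0) ((eC j0).symm ⟨x, hx.1⟩) : γ) = t x
      rw [Equiv.apply_symm_apply]
    have h2 : w j b = t x := by
      rw [hb]
      show t ((eD j) ((eD j).symm ⟨x, hx.2⟩) : γ) = t x
      rw [Equiv.apply_symm_apply]
    rw [h1, h2]
  have hdiag : DetW (w j0) (fun a => momentRow k (u j0 a)) ≠ 0 := by
    rw [DetW, MatRW_moment]
    refine det_moment_ne_zero _ ?_
    intro i i' hii
    have hmem : ∀ i'', Sum.elim (u j0) (w j0) i'' = t (Sum.elim (fun a => ((eC j0 a : γ)))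
        (fun b => ((eD j0 b : γ))) i'') := by
      intro i''; cases i'' <;> rfl
    rw [hmem i, hmem i'] at hii
    have hUmem : ∀ i'', Sum.elim (fun a => ((eC j0 a : γ))) (fun b => ((eD j0 b : γ))) i'' ∈ U := by
      intro i''
      cases i'' with
      | inl a => exact hCU j0 _ (eC j0 a).2
      | inr b => exact hDU j0 _ (eD j0 b).2
    have heq := htinj _ (hUmem i) _ (hUmem i') hii
    cases i with
    | inl a =>
      cases i' with
      | inl a' =>
        have : eC j0 a = eC j0 a' := Subtype.ext heq
        rw [(eC j0).injective this]
      | inr b' =>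
        exfalso
        have heq' : (eC j0 a : γ) = (eD j0 b' : γ) := heq
        have hx : (eC j0 a : γ) ∈ C j0 ∩ D j0 := by
          rw [Finset.mem_inter]
          exact ⟨(eC j0 a).2, heq' ▸ (eD j0 b').2⟩
        rw [hge j0 j0 le_rfl] at hx
        exact absurd hx (Finset.notMem_empty _)
    | inr b =>
      cases i' with
      | inl a' =>
        exfalso
        have heq' : (eD j0 b : γ) = (eC j0 a' : γ) := heq
        have hx : (eC j0 a' : γ) ∈ C j0 ∩ D j0 := by
          rw [Finset.mem_inter]
          exact ⟨(eC j0 a').2, heq'.symm ▸ (eD j0 b).2⟩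
        rw [hge j0 j0 le_rfl] at hx
        exact absurd hx (Finset.notMem_empty _)
      | inr b' =>
        have : eD j0 b = eD j0 b' := Subtype.ext heq
        rw [(eD j0).injective this]
  rw [Finset.sum_eq_single j0 ?h1 ?h2] at happ
  · exact (mul_ne_zero hj0 hdiag) happ
  · intro j _ hjne
    by_cases hgj : g j = 0
    · rw [hgj, zero_mul]
    · have hjT : j ∈ T := by simp [hT, hgj]
      have : j0 < j := lt_of_le_of_ne (T.min'_le j hjT) (Ne.symm hjne)
      rw [hzero j this, mul_zero]
  · intro h
    exact absurd (Finset.mem_univ j0) h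

end

section Staircase

lemma staircase_lt {γ : Type*} [DecidableEq γ] {k z : ℕ} (A B : ℕ → Finset γ)
    (hA : ∀ i, i < z → (A i).card ≤ k) (hB : ∀ i, i < z → (B i).card ≤ k)
    (hst : ∀ i j, i < z → j < z → ((A i ∩ B j).Nonempty ↔ j ≤ i)) :
    z < (2 * k).choose k := by
  classical
  rcases Nat.eq_zero_or_pos k with hk0 | hk
  · subst hk0
    have hz : z = 0 := by
      by_contra hz
      have h0 : 0 < z := Nat.pos_of_ne_zero hz
      have := (hst 0 0 h0 h0).2 le_rfl
      obtain ⟨x, hx⟩ := this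
      have : x ∈ A 0 := Finset.mem_inter.1 hx |>.1
      have hcard := hA 0 h0
      rw [Nat.le_zero, Finset.card_eq_zero] at hcard
      rw [hcard] at this
      exact Finset.notMem_empty x this
    simp [hz]
  · rw [two_mul]
    set γ' := γ ⊕ (Bool × ℕ × ℕ) with hγ'
    set BB : Fin (z+1) → Finset γ := fun i => if (i:ℕ) < z then B i else ∅ with hBB
    set AA : Fin (z+1) → Finset γ := fun j => if (j:ℕ) ≠ 0 then A ((j:ℕ) - 1) else ∅ with hAA
    have hBBc : ∀ i, (BB i).card ≤ k := by
      intro i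
      rw [hBB]
      dsimp only
      split
      · exact hB _ (by assumption)
      · simp
    have hAAc : ∀ j : Fin (z+1), (AA j).card ≤ k := by
      intro j
      rw [hAA]
      dsimp only
      split
      · refine hA _ ?_
        have := j.isLt
        omega
      · simp
    set C' : Fin (z+1) → Finset γ' := fun i =>
      (BB i).image Sum.inl ∪
        (Finset.range (k - (BB i).card)).image (fun n => Sum.inr (false, (i:ℕ), n)) with hC'
    set D' : Fin (z+1) → Finset γ' := fun j =>
      (AA j).image Sum.inl ∪
        (Finset.range (k - (AA j).card)).image (fun n => Sum.inr (true, (j:ℕ), n)) with hD'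
    have cardfun : ∀ (s : Finset γ) (b : Bool) (idx : ℕ), s.card ≤ k →
        (s.image Sum.inl ∪
          (Finset.range (k - s.card)).image (fun n => (Sum.inr (b, idx, n) : γ'))).card = k := by
      intro s b idx hs
      rw [Finset.card_union_of_disjoint]
      · rw [Finset.card_image_of_injective _ Sum.inl_injective,
          Finset.card_image_of_injective _ (by intro x y h; simpa using h),
          Finset.card_range]
        omega
      · rw [Finset.disjoint_left]
        rintro x hx hx'
        simp only [Finset.mem_image] at hx hx'
        obtain ⟨y, _, rfl⟩ := hx
        obtain ⟨n, _, h⟩ := hx'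
        exact absurd h Sum.inr_ne_inl
    have hCc : ∀ i, (C' i).card = k := fun i => cardfun _ _ _ (hBBc i)
    have hDc : ∀ j, (D' j).card = k := fun j => cardfun _ _ _ (hAAc j)
    have hlt : ∀ i j : Fin (z+1), i < j → (C' i ∩ D' j).Nonempty := by
      intro i j hij
      have hjz : (j:ℕ) ≠ 0 := by
        have : (i:ℕ) < (j:ℕ) := hij
        omega
      have hiz : (i:ℕ) < z := by
        have h1 : (i:ℕ) < (j:ℕ) := hij
        have h2 := j.isLt
        omega
      have hj1 : (j:ℕ) - 1 < z := by
        have h2 := j.isLt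
        omega
      have hile : (i:ℕ) ≤ (j:ℕ) - 1 := by
        have : (i:ℕ) < (j:ℕ) := hij
        omega
      obtain ⟨x, hx⟩ := (hst ((j:ℕ)-1) (i:ℕ) hj1 hiz).2 hile
      rw [Finset.mem_inter] at hx
      refine ⟨Sum.inl x, Finset.mem_inter.2 ⟨?_, ?_⟩⟩
      · exact Finset.mem_union_left _ (Finset.mem_image_of_mem _ (by
          rw [hBB]; dsimp only; rw [if_pos hiz]; exact hx.2))
      · exact Finset.mem_union_left _ (Finset.mem_image_of_mem _ (by
          rw [hAA]; dsimp only; rw [if_pos hjz]; exact hx.1))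
    have hge : ∀ i j : Fin (z+1), j ≤ i → C' i ∩ D' j = ∅ := by
      intro i j hji
      rw [Finset.eq_empty_iff_forall_notMem]
      intro x hx
      rw [Finset.mem_inter] at hx
      obtain ⟨hx1, hx2⟩ := hx
      rw [hC', Finset.mem_union] at hx1
      rw [hD', Finset.mem_union] at hx2
      cases x with
      | inl y =>
        have hy1 : y ∈ BB i := by
          rcases hx1 with h | h
          · simp only [Finset.mem_image] at h
            obtain ⟨a, ha, haa⟩ := h
            cases haa
            exact ha
          · simp at h
        have hy2 : y ∈ AA j := by
          rcases hx2 with h | h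
          · simp only [Finset.mem_image] at h
            obtain ⟨a, ha, haa⟩ := h
            cases haa
            exact ha
          · simp at h
        rw [hBB] at hy1
        rw [hAA] at hy2
        dsimp only at hy1 hy2
        by_cases hiz : (i:ℕ) < z
        · rw [if_pos hiz] at hy1
          by_cases hjz : (j:ℕ) ≠ 0
          · rw [if_pos hjz] at hy2
            have hj1 : (j:ℕ) - 1 < z := by
              have := j.isLt
              omega
            have := (hst ((j:ℕ)-1) (i:ℕ) hj1 hiz).1 ⟨y, Finset.mem_inter.2 ⟨hy2, hy1⟩⟩
            have hle : (j:ℕ) ≤ (i:ℕ) := hji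
            omega
          · rw [if_neg hjz] at hy2
            exact Finset.notMem_empty y hy2
        · rw [if_neg hiz] at hy1
          exact Finset.notMem_empty y hy1
      | inr p =>
        have h1 : p.1 = false := by
          rcases hx1 with h | h
          · simp at h
          · simp only [Finset.mem_image] at h
            obtain ⟨n, _, hn⟩ := h
            cases hn
            rfl
        have h2 : p.1 = true := by
          rcases hx2 with h | h
          · simp at h
          · simp only [Finset.mem_image] at h
            obtain ⟨n, _, hn⟩ := h
            cases hn
            rfl
        rw [h1] at h2
        exact Bool.noConfusion h2
    have := core_pairs_bound hk C' D' hCc hDc hlt hge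
    omega

end Staircase


lemma stair_exists : ∀ (n p q : ℕ), p + q = n → ∃ A B : ℕ → Finset ℕ,
    (∀ i, i < (p+q).choose p - 1 → (A i).card ≤ p ∧ (B i).card ≤ q) ∧
    (∀ i j, i < (p+q).choose p - 1 → j < (p+q).choose p - 1 →
      ((A i ∩ B j).Nonempty ↔ j ≤ i)) := by
  intro n
  induction n using Nat.strong_induction_on with
  | _ n ih =>
    intro p q hn
    match p, q with
    | 0, q =>
      refine ⟨fun _ => ∅, fun _ => ∅, ?_, ?_⟩ <;> · intro i
                                                    simp [Nat.choose_zero_right]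
    | p+1, 0 =>
      refine ⟨fun _ => ∅, fun _ => ∅, ?_, ?_⟩ <;> · intro i
                                                    simp [Nat.choose_self]
    | p'+1, q'+1 =>
      set p := p' + 1 with hp
      set q := q' + 1 with hq
      obtain ⟨A₁, B₁, hsz₁, hst₁⟩ := ih (p + q') (by omega) p q' rfl
      obtain ⟨A₂, B₂, hsz₂, hst₂⟩ := ih (p' + q) (by omega) p' q rfl
      set L1 := (p + q').choose p - 1 with hL1
      set L2 := (p' + q).choose p' - 1 with hL2
      have hpos1 : 0 < (p + q').choose p := Nat.choose_pos (by omega)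
      have hpos2 : 0 < (p' + q).choose p' := Nat.choose_pos (by omega)
      have hpascal : (p + q).choose p = (p' + q).choose p' + (p + q').choose p := by
        have h1 : p + q = (p' + q) + 1 := by omega
        have h2 : p' + q = p + q' := by omega
        rw [h1, hp, Nat.choose_succ_succ]
        rw [h2]
      have hL : (p + q).choose p - 1 = L1 + 1 + L2 := by omega
      set e₀ : ℕ → ℕ := fun x => 2 * x + 1 with he₀
      set e₁ : ℕ → ℕ := fun x => 2 * x + 2 with he₁
      have he₀inj : Function.Injective e₀ := fun a b h => by simp [he₀] at h; omega
      have he₁inj : Function.Injective e₁ := fun a b h => by simp [he₁] at h; omega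
      have h0e₀ : ∀ s : Finset ℕ, 0 ∉ s.image e₀ := by
        intro s h
        simp only [Finset.mem_image] at h
        obtain ⟨x, _, hx⟩ := h
        simp [he₀] at hx
      have h0e₁ : ∀ s : Finset ℕ, 0 ∉ s.image e₁ := by
        intro s h
        simp only [Finset.mem_image] at h
        obtain ⟨x, _, hx⟩ := h
        simp [he₁] at hx
      have hdisj : ∀ s t : Finset ℕ, s.image e₀ ∩ t.image e₁ = ∅ := by
        intro s t
        rw [Finset.eq_empty_iff_forall_notMem]
        intro x hx
        rw [Finset.mem_inter] at hx
        obtain ⟨h1, h2⟩ := hx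
        simp only [Finset.mem_image] at h1 h2
        obtain ⟨a, _, ha⟩ := h1
        obtain ⟨b, _, hb⟩ := h2
        rw [← hb] at ha
        simp [he₀, he₁] at ha
        omega
      set A : ℕ → Finset ℕ := fun i =>
        if i < L1 then (A₁ i).image e₀
        else if i = L1 then {0}
        else insert 0 ((A₂ (i - L1 - 1)).image e₁) with hAdef
      set B : ℕ → Finset ℕ := fun i =>
        if i < L1 then insert 0 ((B₁ i).image e₀)
        else if i = L1 then {0}
        else (B₂ (i - L1 - 1)).image e₁ with hBdef
      refine ⟨A, B, ?_, ?_⟩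
      · intro i hi
        rw [hL] at hi
        rw [hAdef, hBdef]
        dsimp only
        by_cases h1 : i < L1
        · rw [if_pos h1, if_pos h1]
          have := hsz₁ i h1
          constructor
          · rw [Finset.card_image_of_injective _ he₀inj]
            exact this.1
          · calc (insert 0 ((B₁ i).image e₀)).card ≤ ((B₁ i).image e₀).card + 1 :=
                Finset.card_insert_le _ _
              _ ≤ q := by rw [Finset.card_image_of_injective _ he₀inj]; have := this.2; omega
        · rw [if_neg h1, if_neg h1]
          by_cases h2 : i = L1
          · rw [if_pos h2, if_pos h2]
            constructor <;> simp [hp, hq]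
          · rw [if_neg h2, if_neg h2]
            have hi2 : i - L1 - 1 < L2 := by omega
            have := hsz₂ _ hi2
            constructor
            · calc (insert 0 ((A₂ (i - L1 - 1)).image e₁)).card
                  ≤ ((A₂ (i - L1 - 1)).image e₁).card + 1 := Finset.card_insert_le _ _
                _ ≤ p := by rw [Finset.card_image_of_injective _ he₁inj]; have := this.1; omega
            · rw [Finset.card_image_of_injective _ he₁inj]
              exact this.2
      · intro i j hi hj
        rw [hL] at hi hj
        rw [hAdef, hBdef]
        dsimp only
        by_cases hi1 : i < L1
        · rw [if_pos hi1]
          by_cases hj1 : j < L1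
          · -- case (1,1)
            rw [if_pos hj1, Finset.inter_insert_of_notMem (h0e₀ _),
              ← Finset.image_inter _ _ he₀inj, Finset.image_nonempty]
            exact hst₁ i j hi1 hj1
          · -- j ≥ L1 > i : both sides false
            have hfalse : ¬ j ≤ i := by omega
            by_cases hj2 : j = L1
            · rw [if_neg hj1, if_pos hj2]
              simp only [hfalse, iff_false]
              rintro ⟨x, hx⟩
              rw [Finset.mem_inter, Finset.mem_singleton] at hx
              obtain ⟨hx1, rfl⟩ := hx
              exact h0e₀ _ hx1
            · rw [if_neg hj1, if_neg hj2]
              simp only [hfalse, iff_false]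
              rintro ⟨x, hx⟩
              have := hdisj (A₁ i) (B₂ (j - L1 - 1))
              rw [this] at hx
              exact Finset.notMem_empty x hx
        · rw [if_neg hi1]
          by_cases hi2 : i = L1
          · rw [if_pos hi2]
            by_cases hj1 : j < L1
            · rw [if_pos hj1]
              have htrue : j ≤ i := by omega
              simp only [htrue, iff_true]
              exact ⟨0, by simp⟩
            · by_cases hj2 : j = L1
              · rw [if_neg hj1, if_pos hj2]
                have htrue : j ≤ i := by omega
                simp only [htrue, iff_true]
                exact ⟨0, by simp⟩
              · rw [if_neg hj1, if_neg hj2]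
                have hfalse : ¬ j ≤ i := by omega
                simp only [hfalse, iff_false]
                rintro ⟨x, hx⟩
                rw [Finset.mem_inter, Finset.mem_singleton] at hx
                obtain ⟨rfl, hx2⟩ := hx
                exact h0e₁ _ hx2
          · rw [if_neg hi2]
            by_cases hj1 : j < L1
            · rw [if_pos hj1]
              have htrue : j ≤ i := by omega
              simp only [htrue, iff_true]
              exact ⟨0, by simp⟩
            · by_cases hj2 : j = L1
              · rw [if_neg hj1, if_pos hj2]
                have htrue : j ≤ i := by omega
                simp only [htrue, iff_true]
                exact ⟨0, by simp⟩
              · rw [if_neg hj1, if_neg hj2,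
                  Finset.insert_inter_of_notMem (h0e₁ _),
                  ← Finset.image_inter _ _ he₁inj, Finset.image_nonempty]
                have hi3 : i - L1 - 1 < L2 := by omega
                have hj3 : j - L1 - 1 < L2 := by omega
                rw [hst₂ _ _ hi3 hj3]
                omega

lemma card_filter_image_le {γ δ : Type*} [DecidableEq δ] (s : Finset γ) (f : γ → δ)
    (p : δ → Prop) [DecidablePred p] [DecidablePred (fun x => p (f x))] :
    ((s.image f).filter p).card ≤ (s.filter (fun x => p (f x))).card := by
  classical
  refine le_trans (Finset.card_le_card (t := (s.filter (fun x => p (f x))).image f)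
    (fun x hx => ?_)) Finset.card_image_le
  rw [Finset.mem_filter, Finset.mem_image] at hx
  obtain ⟨⟨y, hy, rfl⟩, hp⟩ := hx
  rw [Finset.mem_image]
  exact ⟨y, Finset.mem_filter.2 ⟨hy, hp⟩, rfl⟩

lemma construct_cover {α β : Type*} (E : α → β → Prop)
    (k z : ℕ) (rank : α → ℕ) (lvl : β → ℕ)
    (hrank_lt : ∀ a, {b | E a b}.Nonempty → rank a < z)
    (hlvl_lt : ∀ b, (∃ a, E a b) → lvl b < z)
    (hlvl_le : ∀ a b, E a b → lvl b ≤ rank a)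
    (hlvl_ge : ∀ a b, {b | E a b}.Nonempty → (∃ a', E a' b) → lvl b ≤ rank a → E a b)
    (A B : ℕ → Finset ℕ)
    (hsz : ∀ i, i < z → (A i).card ≤ k ∧ (B i).card ≤ k)
    (hst : ∀ i j, i < z → j < z → ((A i ∩ B j).Nonempty ↔ j ≤ i)) :
    ∃ C : Finset (Set α × Set β), CBCover E C ∧ CBLocal C k := by
  classical
  set Λ : Finset ℕ := (Finset.range z).biUnion (fun i => A i ∪ B i) with hΛ
  set Sa : ℕ → Set α := fun l => {a | {b | E a b}.Nonempty ∧ l ∈ A (rank a)} with hSa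
  set Tb : ℕ → Set β := fun l => {b | (∃ a, E a b) ∧ l ∈ B (lvl b)} with hTb
  refine ⟨Λ.image (fun l => (Sa l, Tb l)), ⟨?_, ?_⟩, ?_, ?_⟩
  · intro P hP a ha b hb
    rw [Finset.mem_image] at hP
    obtain ⟨l, _, rfl⟩ := hP
    obtain ⟨hane, hla⟩ := ha
    obtain ⟨hbne, hlb⟩ := hb
    have h1 : rank a < z := hrank_lt a hane
    have h2 : lvl b < z := hlvl_lt b hbne
    have hne : (A (rank a) ∩ B (lvl b)).Nonempty := ⟨l, Finset.mem_inter.2 ⟨hla, hlb⟩⟩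
    exact hlvl_ge a b hane hbne ((hst (rank a) (lvl b) h1 h2).1 hne)
  · intro a b hab
    have hane : ({b | E a b} : Set β).Nonempty := ⟨b, hab⟩
    have hbne : ∃ a', E a' b := ⟨a, hab⟩
    have h1 : rank a < z := hrank_lt a hane
    have h2 : lvl b < z := hlvl_lt b hbne
    obtain ⟨l, hl⟩ := (hst (rank a) (lvl b) h1 h2).2 (hlvl_le a b hab)
    rw [Finset.mem_inter] at hl
    have hlΛ : l ∈ Λ := Finset.mem_biUnion.2
      ⟨rank a, Finset.mem_range.2 h1, Finset.mem_union_left _ hl.1⟩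
    exact ⟨(Sa l, Tb l), Finset.mem_image_of_mem _ hlΛ, ⟨hane, hl.1⟩, ⟨hbne, hl.2⟩⟩
  · intro a
    refine le_trans (card_filter_image_le Λ _ _) ?_
    by_cases hane : ({b | E a b} : Set β).Nonempty
    · refine le_trans (Finset.card_le_card fun l hl => ?_) (hsz _ (hrank_lt a hane)).1
      rw [Finset.mem_filter] at hl
      exact hl.2.2
    · refine le_trans (Finset.card_le_card (t := (∅ : Finset ℕ)) fun l hl => ?_) (by simp)
      rw [Finset.mem_filter] at hl
      exact absurd hl.2.1 hane
  · intro b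
    refine le_trans (card_filter_image_le Λ _ _) ?_
    by_cases hbne : ∃ a', E a' b
    · refine le_trans (Finset.card_le_card fun l hl => ?_) (hsz _ (hlvl_lt b hbne)).2
      rw [Finset.mem_filter] at hl
      exact hl.2.2
    · refine le_trans (Finset.card_le_card (t := (∅ : Finset ℕ)) fun l hl => ?_) (by simp)
      rw [Finset.mem_filter] at hl
      exact absurd hl.2.1 hbne

/-- For a difference graph (neighborhoods of one side linearly ordered by inclusion),
the local complete-bipartite covering number equals the least `k` with `z < C(2k,k)`,
where `z` is the number of distinct nonzero neighborhood sizes on that side. -/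
theorem local_CB_covering_number_of_difference_graph
    {α β : Type*} [Fintype α] [Fintype β] (E : α → β → Prop)
    (hdiff : ∀ a a' : α, {b | E a b} ⊆ {b | E a' b} ∨ {b | E a' b} ⊆ {b | E a b}) :
    sInf {k : ℕ | ∃ C : Finset (Set α × Set β), CBCover E C ∧ CBLocal C k} =
    sInf {k : ℕ |
      ({n : ℕ | 0 < n ∧ ∃ a : α, n = {b | E a b}.ncard}).ncard < (2 * k).choose k} := by
  classical
  set N : α → Set β := fun a => {b | E a b} with hN
  have hNfin : ∀ a, (N a).Finite := fun a => Set.toFinite _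
  have hncard_le : ∀ a, (N a).ncard ≤ Fintype.card β := by
    intro a
    calc (N a).ncard ≤ (Set.univ : Set β).ncard :=
          Set.ncard_le_ncard (Set.subset_univ _) Set.finite_univ
      _ = Fintype.card β := by rw [Set.ncard_univ, Nat.card_eq_fintype_card]
  have hsub_le : ∀ a a', N a ⊆ N a' → (N a).ncard ≤ (N a').ncard :=
    fun a a' h => Set.ncard_le_ncard h (hNfin a')
  have hle_sub : ∀ a a', (N a).ncard ≤ (N a').ncard → N a ⊆ N a' := by
    intro a a' hle
    rcases hdiff a a' with h | h
    · exact h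
    · have heq : N a' = N a := Set.eq_of_subset_of_ncard_le h hle (hNfin a)
      rw [heq]
  set Zf : Finset ℕ := (Finset.range (Fintype.card β + 1)).filter
    (fun n => 0 < n ∧ ∃ a : α, n = (N a).ncard) with hZf
  set z := Zf.card with hzdef
  have hZiff : ∀ n, n ∈ Zf ↔ (0 < n ∧ ∃ a, n = (N a).ncard) := by
    intro n
    rw [hZf]
    constructor
    · intro h
      exact (Finset.mem_filter.1 h).2
    · intro h
      refine Finset.mem_filter.2 ⟨Finset.mem_range.2 ?_, h⟩
      obtain ⟨h1, a, rfl⟩ := h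
      exact Nat.lt_succ_of_le (hncard_le a)
  have hzz : ({n : ℕ | 0 < n ∧ ∃ a : α, n = (N a).ncard}).ncard = z := by
    have hset : {n : ℕ | 0 < n ∧ ∃ a : α, n = (N a).ncard} = (↑Zf : Set ℕ) := by
      ext n
      rw [Finset.mem_coe, hZiff n]
      rfl
    rw [hset, Set.ncard_coe_finset]
  have hmemZf : ∀ a, (N a).Nonempty → (N a).ncard ∈ Zf :=
    fun a ha => (hZiff _).2 ⟨(Set.ncard_pos (hNfin a)).2 ha, a, rfl⟩
  set rank : α → ℕ := fun a => (Zf.filter (fun n => n < (N a).ncard)).card with hrank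
  have hrank_lt : ∀ a, (N a).Nonempty → rank a < z := by
    intro a ha
    refine Finset.card_lt_card ?_
    rw [Finset.filter_ssubset]
    exact ⟨(N a).ncard, hmemZf a ha, lt_irrefl _⟩
  have hrank_mono : ∀ a a', (N a).ncard ≤ (N a').ncard → rank a ≤ rank a' := by
    intro a a' h
    refine Finset.card_le_card (fun n hn => ?_)
    rw [Finset.mem_filter] at hn ⊢
    exact ⟨hn.1, lt_of_lt_of_le hn.2 h⟩
  have hrank_strict : ∀ a a', (N a').Nonempty → (N a').ncard < (N a).ncard →
      rank a' < rank a := by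
    intro a a' ha' h
    refine Finset.card_lt_card ?_
    have hsubs : Zf.filter (fun n => n < (N a').ncard) ⊆ Zf.filter (fun n => n < (N a).ncard) := by
      intro n hn
      rw [Finset.mem_filter] at hn ⊢
      exact ⟨hn.1, lt_trans hn.2 h⟩
    rw [Finset.ssubset_iff_of_subset hsubs]
    refine ⟨(N a').ncard, ?_, ?_⟩
    · rw [Finset.mem_filter]
      exact ⟨hmemZf a' ha', h⟩
    · intro hx
      rw [Finset.mem_filter] at hx
      exact lt_irrefl _ hx.2
  have hminex : ∀ b : β, (∃ a, E a b) → ∃ a0, E a0 b ∧ ∀ a', E a' b →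
      (N a0).ncard ≤ (N a').ncard := by
    intro b hb
    obtain ⟨a1, ha1⟩ := hb
    obtain ⟨a0, ha0, hmin⟩ := Finset.exists_min_image
      (Finset.univ.filter (fun a => E a b)) (fun a => (N a).ncard)
      ⟨a1, by simp [ha1]⟩
    rw [Finset.mem_filter] at ha0
    exact ⟨a0, ha0.2, fun a' ha' => hmin a' (by simp [ha'])⟩
  set lvl : β → ℕ := fun b => if h : ∃ a, E a b then rank (hminex b h).choose else 0 with hlvl
  have hlvl_le : ∀ a b, E a b → lvl b ≤ rank a := by
    intro a b hab
    have h : ∃ a, E a b := ⟨a, hab⟩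
    rw [hlvl]
    dsimp only
    rw [dif_pos h]
    exact hrank_mono _ _ ((hminex b h).choose_spec.2 a hab)
  have hlvl_ge : ∀ a b, (N a).Nonempty → (∃ a', E a' b) → lvl b ≤ rank a → E a b := by
    intro a b ha hb hle
    rw [hlvl] at hle
    dsimp only at hle
    rw [dif_pos hb] at hle
    obtain ⟨ha0, _⟩ := (hminex b hb).choose_spec
    have hcard : (N ((hminex b hb).choose)).ncard ≤ (N a).ncard := by
      by_contra hc
      push_neg at hc
      exact absurd hle (not_le.2 (hrank_strict _ a ha hc))
    exact (hle_sub _ a hcard) ha0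
  have hlvl_lt : ∀ b, (∃ a, E a b) → lvl b < z := by
    intro b hb
    rw [hlvl]
    dsimp only
    rw [dif_pos hb]
    exact hrank_lt _ ⟨b, (hminex b hb).choose_spec.1⟩
  have main : ∀ k : ℕ, (∃ C : Finset (Set α × Set β), CBCover E C ∧ CBLocal C k) ↔
      (({n : ℕ | 0 < n ∧ ∃ a : α, n = (N a).ncard}).ncard < (2 * k).choose k) := by
    intro k
    rw [hzz]
    constructor
    · rintro ⟨C, ⟨hcov1, hcov2⟩, hloc1, hloc2⟩
      by_cases hz0 : z = 0
      · rw [hz0]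
        exact Nat.choose_pos (by omega)
      have hzpos : 0 < z := Nat.pos_of_ne_zero hz0
      have haf : ∀ (i : ℕ) (h : i < z), ∃ a,
          (N a).ncard = ((Zf.orderIsoOfFin rfl ⟨i, h⟩ : ℕ)) ∧ (N a).Nonempty := by
        intro i h
        have hm : ((Zf.orderIsoOfFin rfl ⟨i, h⟩ : ℕ)) ∈ Zf := (Zf.orderIsoOfFin rfl ⟨i, h⟩).2
        obtain ⟨hpos, a, ha⟩ := (hZiff _).1 hm
        exact ⟨a, ha.symm, (Set.ncard_pos (hNfin a)).1 (ha ▸ hpos)⟩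
      haveI : Nonempty α := ⟨(haf 0 hzpos).choose⟩
      set af : ℕ → α := fun i => if h : i < z then (haf i h).choose
        else Classical.arbitrary α with haff
      have hafn : ∀ i (h : i < z), (N (af i)).ncard = (Zf.orderIsoOfFin rfl ⟨i, h⟩ : ℕ)
          ∧ (N (af i)).Nonempty := by
        intro i h
        rw [haff]
        dsimp only
        rw [dif_pos h]
        exact (haf i h).choose_spec
      have hchain : ∀ i j, i ≤ j → j < z → N (af i) ⊆ N (af j) := by
        intro i j hij hj
        have hi : i < z := lt_of_le_of_lt hij hj
        refine hle_sub _ _ ?_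
        rw [(hafn i hi).1, (hafn j hj).1]
        have hle : (⟨i, hi⟩ : Fin z) ≤ ⟨j, hj⟩ := hij
        exact Subtype.coe_le_coe.2 (((Zf.orderIsoOfFin rfl)).le_iff_le.2 hle)
      have hstrictN : ∀ i j, i < j → ∀ (hj : j < z), (N (af i)).ncard < (N (af j)).ncard := by
        intro i j hij hj
        have hi : i < z := lt_trans hij hj
        rw [(hafn i hi).1, (hafn j hj).1]
        have hlt : (⟨i, hi⟩ : Fin z) < ⟨j, hj⟩ := hij
        exact Subtype.coe_lt_coe.2 (((Zf.orderIsoOfFin rfl)).lt_iff_lt.2 hlt)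
      have hbf : ∀ i, i < z → ∃ bb, bb ∈ N (af i) ∧ (0 < i → bb ∉ N (af (i-1))) := by
        intro i h
        by_cases h0 : 0 < i
        · have hlt : (N (af (i-1))).ncard < (N (af i)).ncard := hstrictN (i-1) i (by omega) h
          have hns : ¬ N (af i) ⊆ N (af (i-1)) :=
            fun hsubs => absurd (hsub_le _ _ hsubs) (not_le.2 hlt)
          rw [Set.not_subset] at hns
          obtain ⟨bb, h1, h2⟩ := hns
          exact ⟨bb, h1, fun _ => h2⟩
        · obtain ⟨bb, hbb⟩ := (hafn i h).2
          exact ⟨bb, hbb, fun hc => absurd hc h0⟩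
      haveI : Nonempty β := ⟨(hbf 0 hzpos).choose⟩
      set bf : ℕ → β := fun i => if h : i < z then (hbf i h).choose
        else Classical.arbitrary β with hbff
      have hbfs : ∀ i (h : i < z), bf i ∈ N (af i) ∧ (0 < i → bf i ∉ N (af (i-1))) := by
        intro i h
        rw [hbff]
        dsimp only
        rw [dif_pos h]
        exact (hbf i h).choose_spec
      refine staircase_lt (fun i => C.filter (fun P => af i ∈ P.1))
        (fun j => C.filter (fun P => bf j ∈ P.2))
        (fun i _ => hloc1 (af i)) (fun j _ => hloc2 (bf j)) ?_
      intro i j hi hj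
      constructor
      · rintro ⟨P, hP⟩
        rw [Finset.mem_inter, Finset.mem_filter, Finset.mem_filter] at hP
        obtain ⟨⟨hPC, hPa⟩, _, hPb⟩ := hP
        have hE : E (af i) (bf j) := hcov1 P hPC _ hPa _ hPb
        by_contra hnot
        push_neg at hnot
        have h0j : 0 < j := by omega
        have hsub2 : N (af i) ⊆ N (af (j-1)) := hchain i (j-1) (by omega) (by omega)
        exact ((hbfs j hj).2 h0j) (hsub2 hE)
      · intro hji
        have hE : E (af i) (bf j) := hchain j i hji hi (hbfs j hj).1
        obtain ⟨P, hPC, hPa, hPb⟩ := hcov2 _ _ hE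
        exact ⟨P, Finset.mem_inter.2 ⟨Finset.mem_filter.2 ⟨hPC, hPa⟩,
          Finset.mem_filter.2 ⟨hPC, hPb⟩⟩⟩
    · intro hzk
      obtain ⟨A, B, hsz, hst⟩ := stair_exists (k + k) k k rfl
      have hpos : 0 < (k+k).choose k := Nat.choose_pos (by omega)
      have hzL : z ≤ (k+k).choose k - 1 := by
        rw [two_mul] at hzk
        omega
      exact construct_cover E k z rank lvl hrank_lt hlvl_lt hlvl_le hlvl_ge A B
        (fun i hi => hsz i (by omega)) (fun i j hi hj => hst i j (by omega) (by omega))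
  exact congrArg sInf (Set.ext fun k => main k)
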